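/- Fix n ≥ 1 and let α be an automorphism of RT_n as a partially ordered set, i.e. a bijection α : RT_n → RT_n such that τ ⪯ ν if and only if α(τ) ⪯ α(ν), for all τ, ν ∈ RT_n. If α([(1,1)] ⊎ μ) = [(1,1)] ⊎ μ for every μ ∈ RT_{n−1} (where ⊎ denotes adjoining the pair (1,1) to the multiset μ), then α is the identity map on RT_n. -/
import Mathlib


/-- `IsRT n τ` : `τ` is a representation type of total dimension `n`, i.e. a finite
multiset of pairs `(d, e)` of positive integers with `∑ d·e = n`. -/
def IsRT (n : ℕ) (τ : Multiset (ℕ × ℕ)) : Prop :=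
  (∀ p ∈ τ, 0 < p.1 ∧ 0 < p.2) ∧ (τ.map fun p => p.1 * p.2).sum = n

/-- `ElemRef τ τ'` : `τ'` is obtained from `τ` by a single elementary refinement:
either (1) replacing one pair `(d, e)` by `(a, e), (b, e)` with `a, b ≥ 1`, `a + b = d`,
or (2) replacing two pairs `(d, e), (d, e')` with the same first coordinate by the
single pair `(d, e + e')`. -/
def ElemRef (τ τ' : Multiset (ℕ × ℕ)) : Prop :=
  (∃ (σ : Multiset (ℕ × ℕ)) (d e a b : ℕ), 0 < a ∧ 0 < b ∧ a + b = d ∧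
      τ = (d, e) ::ₘ σ ∧ τ' = (a, e) ::ₘ (b, e) ::ₘ σ) ∨
  (∃ (σ : Multiset (ℕ × ℕ)) (d e e' : ℕ),
      τ = (d, e) ::ₘ (d, e') ::ₘ σ ∧ τ' = (d, e + e') ::ₘ σ)

/-- `RTle μ τ` (i.e. `μ ⪯ τ`) : `μ` is obtained from `τ` by a (possibly empty) finite
sequence of elementary refinements; the reflexive–transitive closure of `ElemRef`. -/
def RTle (μ τ : Multiset (ℕ × ℕ)) : Prop :=
  Relation.ReflTransGen ElemRef τ μ

abbrev MS := Multiset (ℕ × ℕ)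

def sd (τ : MS) : ℕ := (τ.map Prod.fst).sum

lemma sd_cons (p : ℕ × ℕ) (τ : MS) : sd (p ::ₘ τ) = p.1 + sd τ := by
  simp [sd]

lemma isRT_elemRef {n : ℕ} {τ ρ : MS} (h : ElemRef τ ρ) (hτ : IsRT n τ) : IsRT n ρ := by
  obtain ⟨hpos, hsum⟩ := hτ
  rcases h with ⟨θ, d, e, a, b, ha, hb, hab, rfl, rfl⟩ | ⟨θ, d, e, e', rfl, rfl⟩
  · have he : 0 < e := (hpos (d, e) (Multiset.mem_cons_self _ _)).2
    constructor
    · intro p hp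
      rcases Multiset.mem_cons.1 hp with rfl | hp
      · exact ⟨ha, he⟩
      rcases Multiset.mem_cons.1 hp with rfl | hp
      · exact ⟨hb, he⟩
      · exact hpos p (Multiset.mem_cons_of_mem hp)
    · simp only [Multiset.map_cons, Multiset.sum_cons] at hsum ⊢
      subst hab; rw [← hsum]; ring
  · have hd : 0 < d := (hpos (d, e) (Multiset.mem_cons_self _ _)).1
    have he : 0 < e := (hpos (d, e) (Multiset.mem_cons_self _ _)).2
    constructor
    · intro p hp
      rcases Multiset.mem_cons.1 hp with rfl | hp
      · exact ⟨hd, by positivity⟩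
      · exact hpos p (Multiset.mem_cons_of_mem (Multiset.mem_cons_of_mem hp))
    · simp only [Multiset.map_cons, Multiset.sum_cons] at hsum ⊢
      rw [← hsum]; ring

lemma isRT_rtle {n : ℕ} {σ τ : MS} (h : RTle σ τ) (hτ : IsRT n τ) : IsRT n σ := by
  unfold RTle at h
  induction h using Relation.ReflTransGen.head_induction_on with
  | refl => exact hτ
  | head h' _ ih => exact ih (isRT_elemRef h' hτ)

/-- Master structure lemma: along a refinement chain `σ ⪯ τ`, the sum of the first
coordinates weakly decreases; if it stays equal, the chain consists of splits only,
so the cardinality weakly increases; equal cardinality forces `σ = τ`, and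
cardinality `+1` forces a single split. -/
lemma master {n : ℕ} {σ τ : MS} (h : RTle σ τ) :
    IsRT n τ →
    (sd σ ≤ sd τ ∧ (sd σ = sd τ →
      Multiset.card τ ≤ Multiset.card σ ∧
      (Multiset.card σ = Multiset.card τ → σ = τ) ∧
      (Multiset.card σ = Multiset.card τ + 1 →
        ∃ (a b e : ℕ) (ρ : MS), 0 < a ∧ 0 < b ∧ τ = (a + b, e) ::ₘ ρ ∧
          σ = (a, e) ::ₘ (b, e) ::ₘ ρ))) := by
  unfold RTle at h
  induction h using Relation.ReflTransGen.head_induction_on with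
  | refl => exact fun _ => ⟨le_rfl, fun _ => ⟨le_rfl, fun _ => rfl, fun hc => by omega⟩⟩
  | @head τ' ρ h' hrest ih =>
    intro hτ
    have hρ : IsRT n ρ := isRT_elemRef h' hτ
    have P := ih hρ
    rcases h' with ⟨θ, d, e, a, b, ha, hb, hab, rfl, rfl⟩ | ⟨θ, d, e, e', rfl, rfl⟩
    · have hsd : sd ((a, e) ::ₘ (b, e) ::ₘ θ) = sd ((d, e) ::ₘ θ) := by
        simp only [sd_cons]; omega
      have hcard : Multiset.card ((a, e) ::ₘ (b, e) ::ₘ θ)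
          = Multiset.card ((d, e) ::ₘ θ) + 1 := by simp
      refine ⟨by omega, fun hs => ?_⟩
      have hs' : sd σ = sd ((a, e) ::ₘ (b, e) ::ₘ θ) := by omega
      obtain ⟨hc1, hc2, _⟩ := P.2 hs'
      refine ⟨by omega, fun hc => by omega, fun hc => ?_⟩
      have : σ = (a, e) ::ₘ (b, e) ::ₘ θ := hc2 (by omega)
      exact ⟨a, b, e, θ, ha, hb, by rw [hab], this⟩
    · have hd : 0 < d := (hτ.1 (d, e) (Multiset.mem_cons_self _ _)).1
      have hsd : sd ((d, e + e') ::ₘ θ) + d = sd ((d, e) ::ₘ (d, e') ::ₘ θ) := by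
        simp only [sd_cons]; omega
      exact ⟨by omega, fun hs => by omega⟩

/-- The property "all second coordinates are ≥ 2" is preserved under refinement. -/
lemma all_snd_ge_two {σ τ : MS} (h : RTle σ τ) (hτ : ∀ p ∈ τ, 2 ≤ p.2) :
    ∀ p ∈ σ, 2 ≤ p.2 := by
  unfold RTle at h
  induction h using Relation.ReflTransGen.head_induction_on with
  | refl => exact hτ
  | @head τ' ρ h' hrest ih =>
    apply ih
    rcases h' with ⟨θ, d, e, a, b, _, _, _, rfl, rfl⟩ | ⟨θ, d, e, e', rfl, rfl⟩
    · have he : 2 ≤ e := hτ (d, e) (Multiset.mem_cons_self _ _)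
      intro p hp
      rcases Multiset.mem_cons.1 hp with rfl | hp
      · exact he
      rcases Multiset.mem_cons.1 hp with rfl | hp
      · exact he
      · exact hτ p (Multiset.mem_cons_of_mem hp)
    · have he : 2 ≤ e := hτ (d, e) (Multiset.mem_cons_self _ _)
      have he' : 2 ≤ e' := hτ (d, e') (Multiset.mem_cons_of_mem (Multiset.mem_cons_self _ _))
      intro p hp
      rcases Multiset.mem_cons.1 hp with rfl | hp
      · simpa using by omega
      · exact hτ p (Multiset.mem_cons_of_mem (Multiset.mem_cons_of_mem hp))

/-- A single split is a refinement. -/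
lemma rtle_single_split {τ : MS} {d e a b : ℕ} (hmem : (d, e) ∈ τ)
    (ha : 0 < a) (hb : 0 < b) (hab : a + b = d) :
    RTle ((a, e) ::ₘ (b, e) ::ₘ τ.erase (d, e)) τ := by
  apply Relation.ReflTransGen.single
  exact Or.inl ⟨τ.erase (d, e), d, e, a, b, ha, hb, hab, (Multiset.cons_erase hmem).symm, rfl⟩

/-- A single merge going up. -/
lemma rtle_single_merge {τ : MS} {d e e' : ℕ} (hmem : (d, e + e') ∈ τ) :
    RTle τ ((d, e) ::ₘ (d, e') ::ₘ τ.erase (d, e + e')) := by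
  apply Relation.ReflTransGen.single
  exact Or.inr ⟨τ.erase (d, e + e'), d, e, e', rfl, (Multiset.cons_erase hmem).symm⟩
def swm (τ : MS) : MS := τ.map Prod.swap

lemma swm_swm (τ : MS) : swm (swm τ) = τ := by
  simp [swm, Multiset.map_map]

lemma swm_cons (p : ℕ × ℕ) (τ : MS) : swm (p ::ₘ τ) = p.swap ::ₘ swm τ := by
  simp [swm]

lemma mem_swm {p : ℕ × ℕ} {τ : MS} : p ∈ swm τ ↔ p.swap ∈ τ := by
  constructor
  · intro h
    obtain ⟨q, hq, rfl⟩ := Multiset.mem_map.1 h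
    simpa using hq
  · intro h
    exact Multiset.mem_map.2 ⟨p.swap, h, by simp⟩

lemma isRT_swm {n : ℕ} {τ : MS} (h : IsRT n τ) : IsRT n (swm τ) := by
  obtain ⟨hpos, hsum⟩ := h
  constructor
  · intro p hp
    have := hpos p.swap (mem_swm.1 hp)
    exact ⟨this.2, this.1⟩
  · rw [← hsum]
    simp only [swm, Multiset.map_map]
    congr 1
    apply Multiset.map_congr rfl
    intro p _
    simp [mul_comm]

lemma elemRef_swm {τ ρ : MS} (h : ElemRef τ ρ) (hpos : ∀ p ∈ τ, 0 < p.1 ∧ 0 < p.2) :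
    ElemRef (swm ρ) (swm τ) := by
  rcases h with ⟨θ, d, e, a, b, ha, hb, hab, rfl, rfl⟩ | ⟨θ, d, e, e', rfl, rfl⟩
  · refine Or.inr ⟨swm θ, e, a, b, ?_, ?_⟩
    · simp [swm_cons]
    · simp [swm_cons, hab]
  · have he : 0 < e := (hpos (d, e) (Multiset.mem_cons_self _ _)).2
    have he' : 0 < e' := (hpos (d, e') (Multiset.mem_cons_of_mem (Multiset.mem_cons_self _ _))).2
    refine Or.inl ⟨swm θ, e + e', d, e, e', he, he', rfl, ?_, ?_⟩
    · simp [swm_cons]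
    · simp [swm_cons]

lemma rtle_swm' {n : ℕ} {σ τ : MS} (h : RTle σ τ) :
    IsRT n τ → RTle (swm τ) (swm σ) := by
  unfold RTle at h
  induction h using Relation.ReflTransGen.head_induction_on with
  | refl => exact fun _ => Relation.ReflTransGen.refl
  | @head τ' ρ h' hrest ih =>
    intro hτ
    exact Relation.ReflTransGen.tail (ih (isRT_elemRef h' hτ)) (elemRef_swm h' hτ.1)

lemma rtle_swm {n : ℕ} {σ τ : MS} (h : RTle σ τ) (hτ : IsRT n τ) :
    RTle (swm τ) (swm σ) := rtle_swm' h hτ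
lemma sd_of_mem {τ : MS} {d e : ℕ} (h : (d, e) ∈ τ) : sd τ = d + sd (τ.erase (d, e)) := by
  conv_lhs => rw [← Multiset.cons_erase h]
  simp [sd_cons]

lemma card_of_mem {τ : MS} {d e : ℕ} (h : (d, e) ∈ τ) :
    Multiset.card τ = Multiset.card (τ.erase (d, e)) + 1 := by
  conv_lhs => rw [← Multiset.cons_erase h]
  simp

lemma two_le_of_mem {n : ℕ} {τ : MS} {d : ℕ} (hτ : IsRT n τ) (hτF : (1, 1) ∉ τ)
    (hd : (d, 1) ∈ τ) : 2 ≤ d := by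
  have h1 : 0 < d := (hτ.1 (d, 1) hd).1
  by_contra h
  have : d = 1 := by omega
  subst this
  exact hτF hd

lemma A_basic {n : ℕ} {τ ν : MS} (hτ : IsRT n τ) (hν : IsRT n ν)
    (hτF : (1, 1) ∉ τ) (hνF : (1, 1) ∉ ν)
    (hD : ∀ σ : MS, IsRT n σ → (1, 1) ∈ σ → RTle σ τ → RTle σ ν)
    {d : ℕ} (hd : (d, 1) ∈ τ) :
    (∃ c, (c, 1) ∈ ν) ∧ sd τ ≤ sd ν ∧
      (sd τ = sd ν → Multiset.card ν ≤ Multiset.card τ) := by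
  have hd2 : 2 ≤ d := two_le_of_mem hτ hτF hd
  set σ₁ : MS := (1, 1) ::ₘ (d - 1, 1) ::ₘ τ.erase (d, 1) with hσ₁def
  have hσ₁τ : RTle σ₁ τ := rtle_single_split hd (by omega) (by omega) (by omega)
  have hσ₁ : IsRT n σ₁ := isRT_rtle hσ₁τ hτ
  have h11 : (1, 1) ∈ σ₁ := Multiset.mem_cons_self _ _
  have hσ₁ν : RTle σ₁ ν := hD σ₁ hσ₁ h11 hσ₁τ
  have hsd₁ : sd σ₁ = sd τ := by
    rw [sd_of_mem hd]; simp [hσ₁def, sd_cons]; omega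
  have hcard₁ : Multiset.card σ₁ = Multiset.card τ + 1 := by
    rw [card_of_mem hd]; simp [hσ₁def]
  have hM := master hσ₁ν hν
  refine ⟨?_, ?_, ?_⟩
  · by_contra hno
    push_neg at hno
    have hall : ∀ p ∈ ν, 2 ≤ p.2 := by
      intro p hp
      have h1 : 0 < p.2 := (hν.1 p hp).2
      rcases Nat.lt_or_ge p.2 2 with h | h
      · have : p.2 = 1 := by omega
        exact absurd (by rw [← Prod.mk.eta (p := p), this] at hp; exact hp) (hno p.1)
      · exact h
    have := all_snd_ge_two hσ₁ν hall (1, 1) h11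
    omega
  · omega
  · intro hsd
    obtain ⟨hc1, hc2, _⟩ := hM.2 (by omega)
    by_contra hlt
    have : Multiset.card σ₁ = Multiset.card ν := by omega
    have := hc2 this
    rw [← this] at hνF
    exact hνF h11

lemma A_shape {n : ℕ} {τ ν : MS} (hτ : IsRT n τ) (hν : IsRT n ν)
    (hτF : (1, 1) ∉ τ) (hνF : (1, 1) ∉ ν)
    (hD : ∀ σ : MS, IsRT n σ → (1, 1) ∈ σ → RTle σ τ → RTle σ ν)
    (hsd : sd τ = sd ν) (hcard : Multiset.card τ = Multiset.card ν)
    {d : ℕ} (hd : (d, 1) ∈ τ) :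
    ∃ (b : ℕ) (ρ : MS), 0 < b ∧ ν = (b + 1, 1) ::ₘ ρ ∧
      (d - 1, 1) ::ₘ τ.erase (d, 1) = (b, 1) ::ₘ ρ := by
  have hd2 : 2 ≤ d := two_le_of_mem hτ hτF hd
  set σ₁ : MS := (1, 1) ::ₘ (d - 1, 1) ::ₘ τ.erase (d, 1) with hσ₁def
  have hσ₁τ : RTle σ₁ τ := rtle_single_split hd (by omega) (by omega) (by omega)
  have hσ₁ : IsRT n σ₁ := isRT_rtle hσ₁τ hτ
  have h11 : (1, 1) ∈ σ₁ := Multiset.mem_cons_self _ _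
  have hσ₁ν : RTle σ₁ ν := hD σ₁ hσ₁ h11 hσ₁τ
  have hsd₁ : sd σ₁ = sd ν := by
    rw [← hsd, sd_of_mem hd]; simp [hσ₁def, sd_cons]; omega
  have hcard₁ : Multiset.card σ₁ = Multiset.card ν + 1 := by
    rw [← hcard, card_of_mem hd]; simp [hσ₁def]
  obtain ⟨a, b, e, ρ, ha, hb, hνeq, hσeq⟩ := ((master hσ₁ν hν).2 hsd₁).2.2 hcard₁
  have hρ11 : (1, 1) ∉ ρ := fun h => hνF (by rw [hνeq]; exact Multiset.mem_cons_of_mem h)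
  have h11' : (1, 1) ∈ (a, e) ::ₘ (b, e) ::ₘ ρ := by rw [← hσeq]; exact h11
  rcases Multiset.mem_cons.1 h11' with hcase | h11''
  · -- (1,1) = (a,e)
    obtain ⟨ha1, he1⟩ : a = 1 ∧ e = 1 := by
      have := hcase; simp [Prod.ext_iff] at this; omega
    subst ha1 he1
    refine ⟨b, ρ, hb, by rw [hνeq]; try ring_nf, ?_⟩
    have : σ₁ = (1, 1) ::ₘ (b, 1) ::ₘ ρ := hσeq
    rw [hσ₁def] at this
    exact (Multiset.cons_inj_right _).1 this
  rcases Multiset.mem_cons.1 h11'' with hcase | hmem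
  · -- (1,1) = (b,e)
    obtain ⟨hb1, he1⟩ : b = 1 ∧ e = 1 := by
      have := hcase; simp [Prod.ext_iff] at this; omega
    subst hb1 he1
    refine ⟨a, ρ, ha, by rw [hνeq]; try ring_nf, ?_⟩
    have : σ₁ = (1, 1) ::ₘ (a, 1) ::ₘ ρ := by rw [hσeq, Multiset.cons_swap]
    rw [hσ₁def] at this
    exact (Multiset.cons_inj_right _).1 this
  · exact absurd hmem hρ11
lemma A_min {n : ℕ} {τ ν : MS} (hτ : IsRT n τ) (hν : IsRT n ν)
    (hτF : (1, 1) ∉ τ) (hνF : (1, 1) ∉ ν)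
    (hD : ∀ σ : MS, IsRT n σ → (1, 1) ∈ σ → RTle σ τ → RTle σ ν)
    (hsd : sd τ = sd ν) (hcard : Multiset.card τ = Multiset.card ν)
    (hne : ∃ x, (x, 1) ∈ τ) :
    sInf {c | (c, 1) ∈ ν} ≤ sInf {x | (x, 1) ∈ τ} := by
  obtain ⟨d, hd⟩ := hne
  set d₀ := sInf {x : ℕ | (x, 1) ∈ τ} with hd₀def
  have hd₀ : (d₀, 1) ∈ τ := Nat.sInf_mem (⟨d, hd⟩ : Set.Nonempty {x : ℕ | (x, 1) ∈ τ})
  have hd₀2 : 2 ≤ d₀ := two_le_of_mem hτ hτF hd₀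
  obtain ⟨b, ρ, hb, hν', hE⟩ := A_shape hτ hν hτF hνF hD hsd hcard hd₀
  have hm : (d₀ - 1, 1) ∈ (b, 1) ::ₘ ρ := by
    rw [← hE]; exact Multiset.mem_cons_self _ _
  rcases Multiset.mem_cons.1 hm with hcase | hmem
  · have hbeq : b = d₀ - 1 := by
      have := hcase; simp [Prod.ext_iff] at this; omega
    have : (d₀, 1) ∈ ν := by
      rw [hν']
      have : b + 1 = d₀ := by omega
      rw [this]
      exact Multiset.mem_cons_self _ _
    exact Nat.sInf_le this
  · have : (d₀ - 1, 1) ∈ ν := by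
      rw [hν']; exact Multiset.mem_cons_of_mem hmem
    calc sInf {c | (c, 1) ∈ ν} ≤ d₀ - 1 := Nat.sInf_le this
    _ ≤ d₀ := by omega

lemma A_main {n : ℕ} {τ ν : MS} (hτ : IsRT n τ) (hν : IsRT n ν)
    (hτF : (1, 1) ∉ τ) (hνF : (1, 1) ∉ ν)
    (hD : ∀ σ : MS, IsRT n σ → (1, 1) ∈ σ → (RTle σ τ ↔ RTle σ ν))
    {d : ℕ} (hd : (d, 1) ∈ τ) : τ = ν := by
  have hD1 : ∀ σ : MS, IsRT n σ → (1, 1) ∈ σ → RTle σ τ → RTle σ ν :=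
    fun σ h1 h2 h3 => (hD σ h1 h2).1 h3
  have hD2 : ∀ σ : MS, IsRT n σ → (1, 1) ∈ σ → RTle σ ν → RTle σ τ :=
    fun σ h1 h2 h3 => (hD σ h1 h2).2 h3
  obtain ⟨⟨c, hc⟩, hsd1, hcd1⟩ := A_basic hτ hν hτF hνF hD1 hd
  obtain ⟨_, hsd2, hcd2⟩ := A_basic hν hτ hνF hτF hD2 hc
  have hsd : sd τ = sd ν := le_antisymm hsd1 hsd2
  have hcard : Multiset.card τ = Multiset.card ν := le_antisymm (hcd2 hsd.symm) (hcd1 hsd)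
  have hmin1 := A_min hτ hν hτF hνF hD1 hsd hcard ⟨d, hd⟩
  have hmin2 := A_min hν hτ hνF hτF hD2 hsd.symm hcard.symm ⟨c, hc⟩
  set d₀ := sInf {x : ℕ | (x, 1) ∈ τ} with hd₀def
  have hd₀ : (d₀, 1) ∈ τ := Nat.sInf_mem (⟨d, hd⟩ : Set.Nonempty {x : ℕ | (x, 1) ∈ τ})
  have hd₀2 : 2 ≤ d₀ := two_le_of_mem hτ hτF hd₀
  have hmineq : sInf {c : ℕ | (c, 1) ∈ ν} = d₀ := le_antisymm hmin1 hmin2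
  obtain ⟨b, ρ, hb, hν', hE⟩ := A_shape hτ hν hτF hνF hD1 hsd hcard hd₀
  have hcν : (d₀ - 1, 1) ∉ ν := by
    intro h
    have := Nat.sInf_le (s := {c : ℕ | (c, 1) ∈ ν}) h
    omega
  have hm : (d₀ - 1, 1) ∈ (b, 1) ::ₘ ρ := by
    rw [← hE]; exact Multiset.mem_cons_self _ _
  rcases Multiset.mem_cons.1 hm with hcase | hmem
  · have hbeq : b = d₀ - 1 := by
      simp [Prod.ext_iff] at hcase; omega
    subst hbeq
    have hρeq : τ.erase (d₀, 1) = ρ := (Multiset.cons_inj_right _).1 hE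
    have hb1 : d₀ - 1 + 1 = d₀ := by omega
    rw [hν', hb1, ← hρeq, Multiset.cons_erase hd₀]
  · exact absurd (by rw [hν']; exact Multiset.mem_cons_of_mem hmem) hcν
lemma C_nonempty {n : ℕ} {τ : MS} (hτ : IsRT n τ) (hn : 1 ≤ n) : ∃ d e, (d, e) ∈ τ := by
  by_contra h
  push_neg at h
  have : τ = 0 := Multiset.eq_zero_of_forall_notMem (fun p hp => h p.1 p.2 (by simpa using hp))
  rw [this] at hτ
  have := hτ.2
  simp at this
  omega

lemma C_basic {n : ℕ} {τ ν : MS} (hτ : IsRT n τ) (hν : IsRT n ν)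
    (hτc : ∀ p ∈ τ, 2 ≤ p.1) (hνc : ∀ p ∈ ν, 2 ≤ p.1)
    (hD : ∀ σ : MS, IsRT n σ → (∃ p ∈ σ, p.1 = 1) → RTle σ τ → RTle σ ν)
    {d e : ℕ} (hde : (d, e) ∈ τ) :
    sd τ ≤ sd ν ∧ (sd τ = sd ν → Multiset.card ν ≤ Multiset.card τ) := by
  have hd2 : 2 ≤ d := hτc (d, e) hde
  set σ₁ : MS := (1, e) ::ₘ (d - 1, e) ::ₘ τ.erase (d, e) with hσ₁def
  have hσ₁τ : RTle σ₁ τ := rtle_single_split hde (by omega) (by omega) (by omega)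
  have hσ₁ : IsRT n σ₁ := isRT_rtle hσ₁τ hτ
  have h1e : (1, e) ∈ σ₁ := Multiset.mem_cons_self _ _
  have hσ₁ν : RTle σ₁ ν := hD σ₁ hσ₁ ⟨(1, e), h1e, rfl⟩ hσ₁τ
  have hsd₁ : sd σ₁ = sd τ := by
    rw [sd_of_mem hde]; simp [hσ₁def, sd_cons]; omega
  have hcard₁ : Multiset.card σ₁ = Multiset.card τ + 1 := by
    rw [card_of_mem hde]; simp [hσ₁def]
  have hM := master hσ₁ν hν
  refine ⟨by omega, fun hsd => ?_⟩
  obtain ⟨hc1, hc2, _⟩ := hM.2 (by omega)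
  by_contra hlt
  have : σ₁ = ν := hc2 (by omega)
  have := hνc (1, e) (by rw [← this]; exact h1e)
  omega

lemma C_shape1 {n : ℕ} {τ ν : MS} (hτ : IsRT n τ) (hν : IsRT n ν)
    (hτc : ∀ p ∈ τ, 2 ≤ p.1) (hνc : ∀ p ∈ ν, 2 ≤ p.1)
    (hD : ∀ σ : MS, IsRT n σ → (∃ p ∈ σ, p.1 = 1) → RTle σ τ → RTle σ ν)
    (hsd : sd τ = sd ν) (hcard : Multiset.card τ = Multiset.card ν)
    {d e : ℕ} (hde : (d, e) ∈ τ) :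
    ∃ (b : ℕ) (ρ : MS), 0 < b ∧ ν = (b + 1, e) ::ₘ ρ ∧
      (d - 1, e) ::ₘ τ.erase (d, e) = (b, e) ::ₘ ρ := by
  have hd2 : 2 ≤ d := hτc (d, e) hde
  set σ₁ : MS := (1, e) ::ₘ (d - 1, e) ::ₘ τ.erase (d, e) with hσ₁def
  have hσ₁τ : RTle σ₁ τ := rtle_single_split hde (by omega) (by omega) (by omega)
  have hσ₁ : IsRT n σ₁ := isRT_rtle hσ₁τ hτ
  have h1e : (1, e) ∈ σ₁ := Multiset.mem_cons_self _ _
  have hσ₁ν : RTle σ₁ ν := hD σ₁ hσ₁ ⟨(1, e), h1e, rfl⟩ hσ₁τ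
  have hsd₁ : sd σ₁ = sd ν := by
    rw [← hsd, sd_of_mem hde]; simp [hσ₁def, sd_cons]; omega
  have hcard₁ : Multiset.card σ₁ = Multiset.card ν + 1 := by
    rw [← hcard, card_of_mem hde]; simp [hσ₁def]
  obtain ⟨a, b, f, ρ, ha, hb, hνeq, hσeq⟩ := ((master hσ₁ν hν).2 hsd₁).2.2 hcard₁
  have hρ1 : (1, e) ∉ ρ := by
    intro h
    have := hνc (1, e) (by rw [hνeq]; exact Multiset.mem_cons_of_mem h)
    omega
  have h1e' : (1, e) ∈ (a, f) ::ₘ (b, f) ::ₘ ρ := by rw [← hσeq]; exact h1e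
  rcases Multiset.mem_cons.1 h1e' with hcase | h1e''
  · obtain ⟨ha1, hf⟩ : a = 1 ∧ f = e := by
      simp [Prod.ext_iff] at hcase; omega
    rw [ha1, hf] at hνeq hσeq
    refine ⟨b, ρ, hb, by rw [hνeq]; try ring_nf, ?_⟩
    have : σ₁ = (1, e) ::ₘ (b, e) ::ₘ ρ := hσeq
    rw [hσ₁def] at this
    exact (Multiset.cons_inj_right _).1 this
  rcases Multiset.mem_cons.1 h1e'' with hcase | hmem
  · obtain ⟨hb1, hf⟩ : b = 1 ∧ f = e := by
      simp [Prod.ext_iff] at hcase; omega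
    rw [hb1, hf] at hνeq hσeq
    refine ⟨a, ρ, ha, by rw [hνeq]; try ring_nf, ?_⟩
    have : σ₁ = (1, e) ::ₘ (a, e) ::ₘ ρ := by rw [hσeq, Multiset.cons_swap]
    rw [hσ₁def] at this
    exact (Multiset.cons_inj_right _).1 this
  · exact absurd hmem hρ1

lemma C_min {n : ℕ} {τ ν : MS} (hτ : IsRT n τ) (hν : IsRT n ν)
    (hτc : ∀ p ∈ τ, 2 ≤ p.1) (hνc : ∀ p ∈ ν, 2 ≤ p.1)
    (hD : ∀ σ : MS, IsRT n σ → (∃ p ∈ σ, p.1 = 1) → RTle σ τ → RTle σ ν)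
    (hsd : sd τ = sd ν) (hcard : Multiset.card τ = Multiset.card ν)
    (hne : ∃ d e, (d, e) ∈ τ) :
    sInf {x | ∃ e, (x, e) ∈ ν} ≤ sInf {x | ∃ e, (x, e) ∈ τ} := by
  obtain ⟨d, e, hde⟩ := hne
  set d₀ := sInf {x : ℕ | ∃ e, (x, e) ∈ τ} with hd₀def
  obtain ⟨e2, hd₀⟩ : ∃ e2, (d₀, e2) ∈ τ :=
    Nat.sInf_mem (⟨d, e, hde⟩ : Set.Nonempty {x : ℕ | ∃ e, (x, e) ∈ τ})
  have hd₀2 : 2 ≤ d₀ := hτc _ hd₀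
  obtain ⟨b, ρ, hb, hν', hE⟩ := C_shape1 hτ hν hτc hνc hD hsd hcard hd₀
  have hm : (d₀ - 1, e2) ∈ (b, e2) ::ₘ ρ := by
    rw [← hE]; exact Multiset.mem_cons_self _ _
  rcases Multiset.mem_cons.1 hm with hcase | hmem
  · have hbeq : b = d₀ - 1 := by simp [Prod.ext_iff] at hcase; omega
    have : (d₀, e2) ∈ ν := by
      rw [hν']
      have : b + 1 = d₀ := by omega
      rw [this]
      exact Multiset.mem_cons_self _ _
    exact Nat.sInf_le ⟨e2, this⟩
  · have : (d₀ - 1, e2) ∈ ν := by rw [hν']; exact Multiset.mem_cons_of_mem hmem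
    calc sInf {x | ∃ e, (x, e) ∈ ν} ≤ d₀ - 1 := Nat.sInf_le ⟨e2, this⟩
    _ ≤ d₀ := by omega

lemma C_main {n : ℕ} (hn : 1 ≤ n) {τ ν : MS} (hτ : IsRT n τ) (hν : IsRT n ν)
    (hτc : ∀ p ∈ τ, 2 ≤ p.1) (hνc : ∀ p ∈ ν, 2 ≤ p.1)
    (hD : ∀ σ : MS, IsRT n σ → (∃ p ∈ σ, p.1 = 1) → (RTle σ τ ↔ RTle σ ν)) :
    τ = ν := by
  have hD1 : ∀ σ : MS, IsRT n σ → (∃ p ∈ σ, p.1 = 1) → RTle σ τ → RTle σ ν :=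
    fun σ h1 h2 h3 => (hD σ h1 h2).1 h3
  have hD2 : ∀ σ : MS, IsRT n σ → (∃ p ∈ σ, p.1 = 1) → RTle σ ν → RTle σ τ :=
    fun σ h1 h2 h3 => (hD σ h1 h2).2 h3
  obtain ⟨d, e, hde⟩ := C_nonempty hτ hn
  obtain ⟨c, f, hcf⟩ := C_nonempty hν hn
  obtain ⟨hsd1, hcd1⟩ := C_basic hτ hν hτc hνc hD1 hde
  obtain ⟨hsd2, hcd2⟩ := C_basic hν hτ hνc hτc hD2 hcf
  have hsd : sd τ = sd ν := le_antisymm hsd1 hsd2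
  have hcard : Multiset.card τ = Multiset.card ν := le_antisymm (hcd2 hsd.symm) (hcd1 hsd)
  have hmin1 := C_min hτ hν hτc hνc hD1 hsd hcard ⟨d, e, hde⟩
  have hmin2 := C_min hν hτ hνc hτc hD2 hsd.symm hcard.symm ⟨c, f, hcf⟩
  set d₀ := sInf {x : ℕ | ∃ e, (x, e) ∈ τ} with hd₀def
  obtain ⟨e2, hd₀⟩ : ∃ e2, (d₀, e2) ∈ τ :=
    Nat.sInf_mem (⟨d, e, hde⟩ : Set.Nonempty {x : ℕ | ∃ e, (x, e) ∈ τ})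
  have hd₀2 : 2 ≤ d₀ := hτc _ hd₀
  have hmineq : sInf {x : ℕ | ∃ e, (x, e) ∈ ν} = d₀ := le_antisymm hmin1 hmin2
  obtain ⟨b, ρ, hb, hν', hE⟩ := C_shape1 hτ hν hτc hνc hD1 hsd hcard hd₀
  have hcν : (d₀ - 1, e2) ∉ ν := by
    intro h
    have := Nat.sInf_le (s := {x : ℕ | ∃ e, (x, e) ∈ ν}) ⟨e2, h⟩
    omega
  have hm : (d₀ - 1, e2) ∈ (b, e2) ::ₘ ρ := by
    rw [← hE]; exact Multiset.mem_cons_self _ _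
  rcases Multiset.mem_cons.1 hm with hcase | hmem
  · have hbeq : b = d₀ - 1 := by simp [Prod.ext_iff] at hcase; omega
    subst hbeq
    have hρeq : τ.erase (d₀, e2) = ρ := (Multiset.cons_inj_right _).1 hE
    have hb1 : d₀ - 1 + 1 = d₀ := by omega
    rw [hν', hb1, ← hρeq, Multiset.cons_erase hd₀]
  · exact absurd (by rw [hν']; exact Multiset.mem_cons_of_mem hmem) hcν

/-- (Proposition 8.7(a).) If an automorphism `α` of the partially ordered set
`(RT_n, ⪯)` fixes every representation type of the form `[(1,1)] ⊎ μ` with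
`μ ∈ RT_{n-1}`, then `α` is the identity. -/
theorem luna_stmt13 (n : ℕ) (hn : 1 ≤ n)
    (α : Multiset (ℕ × ℕ) → Multiset (ℕ × ℕ))
    (hbij : Set.BijOn α {τ | IsRT n τ} {τ | IsRT n τ})
    (hord : ∀ τ, IsRT n τ → ∀ ν, IsRT n ν → (RTle τ ν ↔ RTle (α τ) (α ν)))
    (hfix : ∀ μ, IsRT (n - 1) μ → α ((1, 1) ::ₘ μ) = (1, 1) ::ₘ μ) :
    ∀ τ, IsRT n τ → α τ = τ := by
  -- α fixes every element containing (1,1)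
  have fixF : ∀ σ : MS, IsRT n σ → (1, 1) ∈ σ → α σ = σ := by
    intro σ hσ h11
    have hcons : ((1, 1) : ℕ × ℕ) ::ₘ σ.erase (1, 1) = σ := Multiset.cons_erase h11
    have herase : IsRT (n - 1) (σ.erase (1, 1)) := by
      constructor
      · intro p hp
        exact hσ.1 p (Multiset.mem_of_mem_erase hp)
      · have := hσ.2
        rw [← hcons] at this
        simp only [Multiset.map_cons, Multiset.sum_cons] at this
        omega
    rw [← hcons]
    exact hfix _ herase
  -- α fixes every non-core element
  have fixNC : ∀ τ : MS, IsRT n τ → (∃ p ∈ τ, p.1 = 1 ∨ p.2 = 1) → α τ = τ := by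
    intro τ hτ hnc
    by_cases h11 : (1, 1) ∈ τ
    · exact fixF τ hτ h11
    have hν : IsRT n (α τ) := hbij.mapsTo hτ
    by_cases hν11 : (1, 1) ∈ α τ
    · have h1 : α (α τ) = α τ := fixF _ hν hν11
      have : α τ = τ := hbij.injOn hν hτ h1
      exact this
    -- the fixed-set downset/upset transfer
    have hDiff : ∀ σ : MS, IsRT n σ → (1, 1) ∈ σ → (RTle σ τ ↔ RTle σ (α τ)) := by
      intro σ hσ hσ11
      have := hord σ hσ τ hτ
      rwa [fixF σ hσ hσ11] at this
    have hUiff : ∀ σ : MS, IsRT n σ → (1, 1) ∈ σ → (RTle τ σ ↔ RTle (α τ) σ) := by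
      intro σ hσ hσ11
      have := hord τ hτ σ hσ
      rwa [fixF σ hσ hσ11] at this
    obtain ⟨p, hp, hcase | hcase⟩ := hnc
    · -- p.1 = 1 : use the swapped Lemma A
      have hd : ((p.2 : ℕ), (1 : ℕ)) ∈ swm τ := by
        rw [mem_swm]
        simpa using (by rw [← Prod.mk.eta (p := p), hcase] at hp; exact hp)
      have hτs : IsRT n (swm τ) := isRT_swm hτ
      have hνs : IsRT n (swm (α τ)) := isRT_swm hν
      have hτs11 : (1, 1) ∉ swm τ := by
        rw [mem_swm]; simpa using h11
      have hνs11 : (1, 1) ∉ swm (α τ) := by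
        rw [mem_swm]; simpa using hν11
      have hDs : ∀ σ : MS, IsRT n σ → (1, 1) ∈ σ →
          (RTle σ (swm τ) ↔ RTle σ (swm (α τ))) := by
        intro σ hσ hσ11
        have hσs : IsRT n (swm σ) := isRT_swm hσ
        have hσs11 : (1, 1) ∈ swm σ := by rw [mem_swm]; simpa using hσ11
        have e1 : RTle σ (swm τ) ↔ RTle τ (swm σ) := by
          constructor
          · intro h
            have := rtle_swm h hτs
            rwa [swm_swm] at this
          · intro h
            have := rtle_swm h hσs
            rwa [swm_swm] at this
        have e2 : RTle σ (swm (α τ)) ↔ RTle (α τ) (swm σ) := by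
          constructor
          · intro h
            have := rtle_swm h hνs
            rwa [swm_swm] at this
          · intro h
            have := rtle_swm h hσs
            rwa [swm_swm] at this
        rw [e1, e2]
        exact hUiff (swm σ) hσs hσs11
      have := A_main hτs hνs hτs11 hνs11 hDs hd
      have h2 := congrArg swm this
      rw [swm_swm, swm_swm] at h2
      exact h2.symm
    · -- p.2 = 1 : Lemma A directly
      have hd : ((p.1 : ℕ), (1 : ℕ)) ∈ τ := by
        rw [← Prod.mk.eta (p := p), hcase] at hp; exact hp
      exact (A_main hτ hν h11 hν11 hDiff hd).symm
  -- now the general case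
  intro τ hτ
  by_cases hnc : ∃ p ∈ τ, p.1 = 1 ∨ p.2 = 1
  · exact fixNC τ hτ hnc
  push_neg at hnc
  have hν : IsRT n (α τ) := hbij.mapsTo hτ
  by_cases hnc' : ∃ p ∈ α τ, p.1 = 1 ∨ p.2 = 1
  · have h1 : α (α τ) = α τ := fixNC _ hν hnc'
    exact hbij.injOn hν hτ h1
  push_neg at hnc'
  have hτc : ∀ p ∈ τ, 2 ≤ p.1 := by
    intro p hp
    have := (hτ.1 p hp).1
    have := (hnc p hp).1
    omega
  have hνc : ∀ p ∈ α τ, 2 ≤ p.1 := by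
    intro p hp
    have := (hν.1 p hp).1
    have := (hnc' p hp).1
    omega
  have hD : ∀ σ : MS, IsRT n σ → (∃ p ∈ σ, p.1 = 1) → (RTle σ τ ↔ RTle σ (α τ)) := by
    intro σ hσ ⟨p, hp, hp1⟩
    have hσfix : α σ = σ := fixNC σ hσ ⟨p, hp, Or.inl hp1⟩
    have := hord σ hσ τ hτ
    rwa [hσfix] at this
  exact (C_main hn hτ hν hτc hνc hD).symm
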